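/- arXiv:2511.00912 — 12 statements merged into one kernel-verified Lean document; each statement's English description precedes it below -/
import Mathlib

section
/- Let 𝔐 = (M, ⊨, P(L)) be a normal abstract model structure and let S = (L, ⊢) be the logical structure induced by 𝔐. Then S is finitary if and only if, for every finite Λ ⊆ L, the anti-model structure 𝔐_Λ is compact. -/
open Set

/-- A set `Γ ⊆ L` is satisfiable in the amst given by `sat` if some model satisfies it. -/
def AmstSatisfiable {M L : Type*} (sat : M → Set L → Prop) (Γ : Set L) : Prop :=
  ∃ m : M, sat m Γ

/-- `Γ` is finitely satisfiable if every finite subset of `Γ` is satisfiable. -/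
def AmstFinSatisfiable {M L : Type*} (sat : M → Set L → Prop) (Γ : Set L) : Prop :=
  ∀ Δ : Set L, Δ ⊆ Γ → Δ.Finite → AmstSatisfiable sat Δ

/-- An amst is compact if satisfiability and finite satisfiability coincide. -/
def AmstCompact {M L : Type*} (sat : M → Set L → Prop) : Prop :=
  ∀ Γ : Set L, AmstSatisfiable sat Γ ↔ AmstFinSatisfiable sat Γ

/-- `ModOf sat Γ` is the set of models satisfying `Γ`. -/
def ModOf {M L : Type*} (sat : M → Set L → Prop) (Γ : Set L) : Set M :=
  {m : M | sat m Γ}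

/-- The consequence relation of the logical structure induced by the amst:
`Γ ⊢ α` iff `Mod(Γ) ⊆ Mod({α})`. -/
def Entails {M L : Type*} (sat : M → Set L → Prop) (Γ : Set L) (α : L) : Prop :=
  ModOf sat Γ ⊆ ModOf sat ({α} : Set L)

/-- A logical structure (given by its consequence relation) is finitary. -/
def IsFinitary {L : Type*} (turn : Set L → L → Prop) : Prop :=
  ∀ (Γ : Set L) (α : L), turn Γ α → ∃ Γ' : Set L, Γ' ⊆ Γ ∧ Γ'.Finite ∧ turn Γ' α

/-- An amst is normal if satisfaction of a set is equivalent to satisfaction of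
each of its singletons. -/
def AmstNormal {M L : Type*} (sat : M → Set L → Prop) : Prop :=
  ∀ (m : M) (Γ : Set L), sat m Γ ↔ ∀ α ∈ Γ, sat m ({α} : Set L)

/-- The anti-model structure relative to `Λ`: domain `M \ Mod(Λ)`, satisfaction restricted. -/
def AntiSat {M L : Type*} (sat : M → Set L → Prop) (Λ : Set L) :
    {m : M // m ∉ ModOf sat Λ} → Set L → Prop :=
  fun m Γ => sat m.1 Γ

/-- A set is explosive (trivial) in a logical structure if it entails everything. -/
def IsExplosive {L : Type*} (turn : Set L → L → Prop) (Γ : Set L) : Prop :=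
  ∀ γ : L, turn Γ γ

/-- gECQ for a logical structure. -/
def GECQ {L : Type*} (turn : Set L → L → Prop) : Prop :=
  ∀ α : L, ∃ β : L, IsExplosive turn ({α, β} : Set L)

/-- sECQ for a logical structure. -/
def SECQ {L : Type*} (turn : Set L → L → Prop) : Prop :=
  ∀ α : L, ∃ Γ : Set L, Γ ∪ {α} ≠ univ ∧ IsExplosive turn (Γ ∪ {α})

/-- spECQ for a logical structure. -/
def SPECQ {L : Type*} (turn : Set L → L → Prop) : Prop :=
  ∀ Γ : Set L, Γ ≠ univ → ∃ α : L, Γ ∪ {α} ≠ univ ∧ IsExplosive turn (Γ ∪ {α})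

/-- pfECQ for a logical structure. -/
def PFECQ {L : Type*} (turn : Set L → L → Prop) : Prop :=
  ∀ Γ : Set L, Γ ≠ univ → ∃ Δ : Set L, Δ ≠ univ ∧ Γ ⊆ Δ ∧ IsExplosive turn Δ

/-- gECQ-sat for an amst. -/
def GECQsat {M L : Type*} (sat : M → Set L → Prop) : Prop :=
  ∀ α : L, ∃ β : L, ¬ AmstSatisfiable sat ({α, β} : Set L)

/-- sECQ-sat for an amst. -/
def SECQsat {M L : Type*} (sat : M → Set L → Prop) : Prop :=
  ∀ α : L, ∃ Γ : Set L, Γ ∪ {α} ≠ univ ∧ ¬ AmstSatisfiable sat (Γ ∪ {α})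

/-- spECQ-sat for an amst. -/
def SPECQsat {M L : Type*} (sat : M → Set L → Prop) : Prop :=
  ∀ Γ : Set L, Γ ≠ univ → ∃ α : L, Γ ∪ {α} ≠ univ ∧ ¬ AmstSatisfiable sat (Γ ∪ {α})

/-- pfECQ-sat for an amst. -/
def PFECQsat {M L : Type*} (sat : M → Set L → Prop) : Prop :=
  ∀ Γ : Set L, Γ ≠ univ → ∃ Δ : Set L, Δ ≠ univ ∧ Γ ⊆ Δ ∧ ¬ AmstSatisfiable sat Δ

/-- gECQ-finsat for an amst. -/
def GECQfinsat {M L : Type*} (sat : M → Set L → Prop) : Prop :=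
  ∀ α : L, ∃ β : L, ¬ AmstFinSatisfiable sat ({α, β} : Set L)

/-- sECQ-finsat for an amst. -/
def SECQfinsat {M L : Type*} (sat : M → Set L → Prop) : Prop :=
  ∀ α : L, ∃ Γ : Set L, Γ ∪ {α} ≠ univ ∧ ¬ AmstFinSatisfiable sat (Γ ∪ {α})

/-- spECQ-finsat for an amst. -/
def SPECQfinsat {M L : Type*} (sat : M → Set L → Prop) : Prop :=
  ∀ Γ : Set L, Γ ≠ univ → ∃ α : L, Γ ∪ {α} ≠ univ ∧ ¬ AmstFinSatisfiable sat (Γ ∪ {α})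

/-- pfECQ-finsat for an amst. -/
def PFECQfinsat {M L : Type*} (sat : M → Set L → Prop) : Prop :=
  ∀ Γ : Set L, Γ ≠ univ → ∃ Δ : Set L, Δ ≠ univ ∧ Γ ⊆ Δ ∧ ¬ AmstFinSatisfiable sat Δ

/-- `Σ'` is satisfiable relative to a collection `K` of subsets of `L` if every
subset of `Σ'` belonging to `K` is satisfiable. -/
def KSatisfiable {M L : Type*} (sat : M → Set L → Prop) (K : Set (Set L)) (S : Set L) : Prop :=
  ∀ Δ : Set L, Δ ⊆ S → Δ ∈ K → AmstSatisfiable sat Δ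

/-- The principal ultrafilter on `I` generated by `s` (as a family of subsets of `I`). -/
def PrincipalUF {L : Type*} (I : Set L) (s : L) : Set (Set L) :=
  {X : Set L | X ⊆ I ∧ s ∈ X}

/-- for normal amsts, `S` is finitary iff `𝔐_Λ` is compact for every finite `Λ`. -/
theorem finitary_iff_antiModel_compact_of_normal {M L : Type*} [Nonempty M]
    (sat : M → Set L → Prop) (hnorm : AmstNormal sat) :
    IsFinitary (Entails sat) ↔ ∀ Λ : Set L, Λ.Finite → AmstCompact (AntiSat sat Λ) := by
  constructor
  · intro hfin Λ hΛ Γ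
    constructor
    · rintro ⟨⟨m, hmnot⟩, hm⟩ Δ hΔ _
      exact ⟨⟨m, hmnot⟩, (hnorm m Δ).mpr fun β hβ => (hnorm m Γ).mp hm β (hΔ hβ)⟩
    · intro hfs
      by_contra hns
      have hent : ∀ α ∈ Λ, Entails sat Γ α := by
        intro α hα m hmΓ
        have hmΛ : m ∈ ModOf sat Λ := by
          by_contra h
          exact hns ⟨⟨m, h⟩, hmΓ⟩
        exact (hnorm m Λ).mp hmΛ α hα
      have hch : ∀ α : Λ, ∃ Γ' : Set L, Γ' ⊆ Γ ∧ Γ'.Finite ∧ Entails sat Γ' α :=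
        fun α => hfin Γ α (hent α α.2)
      choose f hsub hfinf hentf using hch
      haveI := hΛ.to_subtype
      have hΓ'fin : (⋃ α : Λ, f α).Finite := Set.finite_iUnion hfinf
      have hΓ'sub : (⋃ α : Λ, f α) ⊆ Γ := Set.iUnion_subset fun α => hsub α
      obtain ⟨⟨m, hmnot⟩, hm⟩ := hfs _ hΓ'sub hΓ'fin
      apply hmnot
      refine (hnorm m Λ).mpr fun α hα => ?_
      have hmf : m ∈ ModOf sat (f ⟨α, hα⟩) := by
        refine (hnorm m _).mpr fun β hβ => (hnorm m _).mp hm β ?_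
        exact Set.mem_iUnion.mpr ⟨⟨α, hα⟩, hβ⟩
      exact hentf ⟨α, hα⟩ hmf
  · intro hcomp Γ α hΓα
    have h := hcomp {α} (Set.finite_singleton α) Γ
    have hnsat : ¬ AmstSatisfiable (AntiSat sat ({α} : Set L)) Γ := by
      rintro ⟨⟨m, hm⟩, hsat⟩
      exact hm (hΓα hsat)
    have hnfs : ¬ AmstFinSatisfiable (AntiSat sat ({α} : Set L)) Γ :=
      fun hfs => hnsat (h.mpr hfs)
    rw [AmstFinSatisfiable] at hnfs
    push_neg at hnfs
    obtain ⟨Δ, hΔΓ, hΔfin, hΔns⟩ := hnfs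
    refine ⟨Δ, hΔΓ, hΔfin, fun m hm => ?_⟩
    by_contra hmα
    exact hΔns ⟨⟨m, hmα⟩, hm⟩
end

section
/- Let 𝔐 = (M, ⊨, P(L)) be a normal abstract model structure such that the logical structure S = (L, ⊢) induced by 𝔐 is finitary. If there exists a finite unsatisfiable subset of L, then 𝔐 is compact. -/
open Set

/-- a normal amst inducing a finitary logical structure, having a finite
unsatisfiable set, is compact. -/
theorem compact_of_normal_finitary_of_finite_unsat {M L : Type*} [Nonempty M]
    (sat : M → Set L → Prop) (hnorm : AmstNormal sat)
    (hfin : IsFinitary (Entails sat))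
    (hexists : ∃ Γ : Set L, Γ.Finite ∧ ¬ AmstSatisfiable sat Γ) :
    AmstCompact sat := by
  intro Γ
  constructor
  · rintro ⟨m, hm⟩ Δ hΔΓ _
    exact ⟨m, (hnorm m Δ).mpr fun α hα => (hnorm m Γ).mp hm α (hΔΓ hα)⟩
  · intro hfs
    by_contra hns
    obtain ⟨Γ₀, hΓ₀fin, hΓ₀unsat⟩ := hexists
    -- Γ entails everything, since Mod Γ = ∅
    have hent : ∀ α : L, Entails sat Γ α := by
      intro α m hm
      exact absurd ⟨m, hm⟩ hns
    -- choose finite subsets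
    choose f hf1 hf2 hf3 using fun α => hfin Γ α (hent α)
    set Δ : Set L := ⋃ α ∈ Γ₀, f α with hΔ
    have hΔΓ : Δ ⊆ Γ := by
      intro x hx
      simp only [hΔ, mem_iUnion] at hx
      obtain ⟨α, _, hx⟩ := hx
      exact hf1 α hx
    have hΔfin : Δ.Finite := hΓ₀fin.biUnion fun α _ => hf2 α
    obtain ⟨m, hm⟩ := hfs Δ hΔΓ hΔfin
    apply hΓ₀unsat
    refine ⟨m, (hnorm m Γ₀).mpr fun α hα => ?_⟩
    have hmfα : sat m (f α) := by
      refine (hnorm m (f α)).mpr fun β hβ => (hnorm m Δ).mp hm β ?_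
      simp only [hΔ, mem_iUnion]
      exact ⟨α, hα, hβ⟩
    exact hf3 α hmfα
end

section
/- Let 𝔐 = (M, ⊨, P(L)) be a normal abstract model structure such that for every α ∈ L there exists a finite set Λ_α ⊆ L with Mod(Λ_α) = M \ Mod({α}). If the logical structure S = (L, ⊢) induced by 𝔐 is finitary, then 𝔐 is compact. -/
open Set

/-- if a normal amst has, for each `α`, some finite `Λ_α` with
`Mod(Λ_α) = M \\ Mod({α})`, then finitary-ness implies compactness. -/
theorem compact_of_finitary {M L : Type*} [Nonempty M]
    (sat : M → Set L → Prop) (hnorm : AmstNormal sat)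
    (hanti : ∀ α : L, ∃ Λ : Set L, Λ.Finite ∧
      ModOf sat Λ = (univ : Set M) \ ModOf sat ({α} : Set L))
    (hfin : IsFinitary (Entails sat)) :
    AmstCompact sat := by
  intro Γ
  constructor
  · rintro ⟨m, hm⟩ Δ hΔ _
    exact ⟨m, (hnorm m Δ).2 fun α hα => (hnorm m Γ).1 hm α (hΔ hα)⟩
  · intro hfs
    by_contra hns
    cases isEmpty_or_nonempty L with
    | inl h =>
        have hΓ : Γ = ∅ := Set.eq_empty_of_isEmpty Γ
        obtain ⟨m⟩ := ‹Nonempty M›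
        exact hns ⟨m, (hnorm m Γ).2 fun α hα => h.elim α⟩
    | inr h =>
        obtain ⟨α⟩ := h
        obtain ⟨Λ, hΛfin, hΛ⟩ := hanti α
        have hent : ∀ β : L, Entails sat Γ β := fun β m hm =>
          absurd ⟨m, hm⟩ hns
        choose F hFsub hFfin hFent using fun β => hfin Γ β (hent β)
        set Δ : Set L := F α ∪ ⋃ β ∈ Λ, F β with hΔdef
        have hΔsub : Δ ⊆ Γ :=
          Set.union_subset (hFsub α) (Set.iUnion₂_subset fun β _ => hFsub β)
        have hΔfin : Δ.Finite := (hFfin α).union (hΛfin.biUnion fun β _ => hFfin β)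
        obtain ⟨m, hm⟩ := hfs Δ hΔsub hΔfin
        have hsub : ∀ S, S ⊆ Δ → sat m S := fun S hS =>
          (hnorm m S).2 fun γ hγ => (hnorm m Δ).1 hm γ (hS hγ)
        have hmα : m ∈ ModOf sat ({α} : Set L) :=
          hFent α (hsub (F α) Set.subset_union_left)
        have hmΛ : m ∈ ModOf sat Λ := by
          refine (hnorm m Λ).2 fun β hβ => ?_
          exact hFent β (hsub (F β)
            (Set.subset_union_of_subset_right (Set.subset_biUnion_of_mem hβ) _))
        rw [hΛ] at hmΛ
        exact hmΛ.2 hmα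
end

section
/- Let S = (L, ⊢) be a logical structure with L infinite, and let 𝔐 = (L, ⊨, P(L)) be the abstract model structure whose domain is L itself, where for all Γ ∪ {α} ⊆ L one defines α ⊨ Γ iff Γ ⊬ α. Then: (i) gECQ holds in S iff gECQ-sat holds in 𝔐; (ii) sECQ holds in S iff sECQ-sat holds in 𝔐; (iii) spECQ holds in S iff spECQ-sat holds in 𝔐; (iv) pfECQ holds in S iff pfECQ-sat holds in 𝔐. -/
open Set

/-- for the amst on domain `L` with `α ⊨ Γ` iff `Γ ⊬ α`, the syntactic
principles in `S` are equivalent to the corresponding sat-variants. -/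
theorem syntactic_iff_sat_variants {L : Type*} [Infinite L] (turn : Set L → L → Prop) :
    (GECQ turn ↔ GECQsat (fun (α : L) (Γ : Set L) => ¬ turn Γ α)) ∧
      (SECQ turn ↔ SECQsat (fun (α : L) (Γ : Set L) => ¬ turn Γ α)) ∧
      (SPECQ turn ↔ SPECQsat (fun (α : L) (Γ : Set L) => ¬ turn Γ α)) ∧
      (PFECQ turn ↔ PFECQsat (fun (α : L) (Γ : Set L) => ¬ turn Γ α)) := by
  have key : ∀ Γ : Set L, ¬ AmstSatisfiable (fun (α : L) (Γ : Set L) => ¬ turn Γ α) Γ ↔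
      IsExplosive turn Γ := by
    intro Γ
    simp [AmstSatisfiable, IsExplosive]
  simp only [GECQ, GECQsat, SECQ, SECQsat, SPECQ, SPECQsat, PFECQ, PFECQsat, key]
  tauto
end

section
/- Let 𝔐 = (M, ⊨, P(L)) be an abstract model structure with L infinite. Then: (i) if spECQ-sat holds in 𝔐 then gECQ-sat holds in 𝔐; (ii) if spECQ-sat holds in 𝔐 then pfECQ-sat holds in 𝔐; (iii) if gECQ-sat holds in 𝔐 then sECQ-sat holds in 𝔐; (iv) if spECQ-sat holds in 𝔐 then sECQ-sat holds in 𝔐; (v) if pfECQ-sat holds in 𝔐 then sECQ-sat holds in 𝔐. -/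
open Set

/-- implications between the sat-variants. -/
theorem sat_variant_implications {M L : Type*} [Nonempty M] [Infinite L]
    (sat : M → Set L → Prop) :
    (SPECQsat sat → GECQsat sat) ∧
      (SPECQsat sat → PFECQsat sat) ∧
      (GECQsat sat → SECQsat sat) ∧
      (SPECQsat sat → SECQsat sat) ∧
      (PFECQsat sat → SECQsat sat) := by
  have hfin : ∀ (s : Set L), s.Finite → s ≠ univ := fun s hs h => by
    rw [h] at hs; exact Set.infinite_univ hs
  have hsp_g : SPECQsat sat → GECQsat sat := by
    intro h α
    obtain ⟨β, hne, hns⟩ := h {α} (hfin _ (finite_singleton α))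
    refine ⟨β, ?_⟩
    have : ({α, β} : Set L) = {α} ∪ {β} := by
      ext x; simp [Set.mem_insert_iff, or_comm]
    rw [this]; exact hns
  have hsp_pf : SPECQsat sat → PFECQsat sat := by
    intro h Γ hΓ
    obtain ⟨α, hne, hns⟩ := h Γ hΓ
    exact ⟨Γ ∪ {α}, hne, subset_union_left, hns⟩
  have hg_s : GECQsat sat → SECQsat sat := by
    intro h α
    obtain ⟨β, hns⟩ := h α
    refine ⟨{β}, hfin _ ((finite_singleton β).union (finite_singleton α)), ?_⟩
    have : ({β} : Set L) ∪ {α} = {α, β} := by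
      ext x; simp [Set.mem_insert_iff, or_comm]
    rw [this]; exact hns
  have hpf_s : PFECQsat sat → SECQsat sat := by
    intro h α
    obtain ⟨Δ, hne, hsub, hns⟩ := h {α} (hfin _ (finite_singleton α))
    refine ⟨Δ, ?_, ?_⟩ <;> rw [Set.union_eq_self_of_subset_right hsub]
    · exact hne
    · exact hns
  exact ⟨hsp_g, hsp_pf, hg_s, fun h => hg_s (hsp_g h), hpf_s⟩
end

section
/- Let 𝔐 = (M, ⊨, P(L)) be a normal abstract model structure with L infinite. Then sECQ-sat holds in 𝔐 if and only if for each α ∈ L there exists β ∈ L \ {α} such that L \ {β} is not satisfiable. -/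
open Set

/-- characterization of sECQ-sat for normal amsts. -/
theorem secqSat_iff_of_normal {M L : Type*} [Nonempty M] [Infinite L]
    (sat : M → Set L → Prop) (hnorm : AmstNormal sat) :
    SECQsat sat ↔
      ∀ α : L, ∃ β : L, β ≠ α ∧ ¬ AmstSatisfiable sat ((univ : Set L) \ {β}) := by
  have mono : ∀ (Γ Δ : Set L), Γ ⊆ Δ → AmstSatisfiable sat Δ → AmstSatisfiable sat Γ := by
    rintro Γ Δ hsub ⟨m, hm⟩
    exact ⟨m, (hnorm m Γ).2 fun α hα => (hnorm m Δ).1 hm α (hsub hα)⟩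
  constructor
  · intro h α
    obtain ⟨Γ, hne, hunsat⟩ := h α
    obtain ⟨β, hβ⟩ := (ne_univ_iff_exists_notMem _).1 hne
    refine ⟨β, fun e => hβ (by simp [e]), fun hs => hunsat (mono _ _ ?_ hs)⟩
    intro x hx
    simp only [mem_diff, mem_univ, mem_singleton_iff, true_and]
    rintro rfl; exact hβ hx
  · intro h α
    obtain ⟨β, hβα, hunsat⟩ := h α
    have heq : (univ \ {β, α} : Set L) ∪ {α} = univ \ {β} := by
      ext x
      simp only [mem_union, mem_diff, mem_univ, mem_insert_iff, mem_singleton_iff, true_and]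
      constructor
      · rintro (hx | rfl)
        · exact fun e => hx (Or.inl e)
        · exact fun e => hβα e.symm
      · intro hx
        by_cases hxa : x = α
        · exact Or.inr hxa
        · exact Or.inl fun e => e.elim hx hxa
    refine ⟨univ \ {β, α}, ?_, heq ▸ hunsat⟩
    rw [heq]
    intro e
    have : β ∈ (univ \ {β} : Set L) := by rw [e]; exact mem_univ β
    exact this.2 rfl
end

section
/- Let 𝔐 = (M, ⊨, P(L)) be an abstract model structure with L infinite. If spECQ-sat holds in 𝔐, then there exists φ ∈ L such that {φ} is not satisfiable, and pfECQ-sat holds in 𝔐. Moreover, if every Γ ⊊ L that is satisfiable is also finitely satisfiable, then the converse holds: if there exists φ ∈ L with {φ} not satisfiable and pfECQ-sat holds in 𝔐, then spECQ-sat holds in 𝔐. -/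
open Set

/-- spECQ-sat implies the existence of an unsatisfiable singleton together
with pfECQ-sat; and conversely, provided every satisfiable proper subset is finitely
satisfiable. -/
theorem specqSat_iff_pfecqSat {M L : Type*} [Nonempty M] [Infinite L]
    (sat : M → Set L → Prop) :
    (SPECQsat sat →
      (∃ φ : L, ¬ AmstSatisfiable sat ({φ} : Set L)) ∧ PFECQsat sat) ∧
    ((∀ Γ : Set L, Γ ≠ univ → AmstSatisfiable sat Γ → AmstFinSatisfiable sat Γ) →
      ((∃ φ : L, ¬ AmstSatisfiable sat ({φ} : Set L)) ∧ PFECQsat sat →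
        SPECQsat sat)) := by
  constructor
  · intro h
    constructor
    · obtain ⟨α, hα, hunsat⟩ := h ∅ (by
        intro he
        have : (Infinite.natEmbedding L 0) ∈ (∅ : Set L) := he ▸ mem_univ _
        exact this)
      exact ⟨α, by simpa using hunsat⟩
    · intro Γ hΓ
      obtain ⟨α, hne, hunsat⟩ := h Γ hΓ
      exact ⟨Γ ∪ {α}, hne, subset_union_left, hunsat⟩
  · rintro hfin ⟨⟨φ, hφ⟩, hpf⟩ Γ hΓ
    by_cases hcase : Γ ∪ {φ} = univ
    · -- Γ = univ \ {φ}, use pfECQ-sat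
      have hφΓ : φ ∉ Γ := by
        intro hmem
        apply hΓ
        rw [← hcase]
        ext x; simp (config := {contextual := true}) [or_imp]
        intro hx; exact hmem
      have hΓeq : Γ = univ \ {φ} := by
        apply Subset.antisymm
        · intro x hx
          exact ⟨mem_univ x, by rintro rfl; exact hφΓ hx⟩
        · intro x hx
          have : x ∈ Γ ∪ {φ} := hcase ▸ mem_univ x
          rcases this with h | h
          · exact h
          · exact absurd h hx.2
      obtain ⟨Δ, hΔne, hΓΔ, hΔunsat⟩ := hpf Γ hΓ
      have hΔeq : Δ = Γ := by
        apply Subset.antisymm _ hΓΔ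
        intro x hx
        by_contra hxΓ
        have hxφ : x = φ := by
          by_contra hne
          exact hxΓ (hΓeq ▸ ⟨mem_univ x, hne⟩)
        apply hΔne
        apply eq_univ_of_univ_subset
        intro y _
        by_cases hy : y = φ
        · rw [hy, ← hxφ]; exact hx
        · exact hΓΔ (hΓeq ▸ ⟨mem_univ y, hy⟩)
      -- pick some α ∈ Γ
      obtain ⟨a, b, hab⟩ : ∃ a b : L, a ≠ b := by
        exact ⟨_, _, (Infinite.natEmbedding L).injective.ne (by norm_num : (0:ℕ) ≠ 1)⟩
      have : ∃ α : L, α ∈ Γ := by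
        by_cases h : a = φ
        · exact ⟨b, hΓeq ▸ ⟨mem_univ b, by rw [← h]; exact fun hb => hab hb.symm⟩⟩
        · exact ⟨a, hΓeq ▸ ⟨mem_univ a, h⟩⟩
      obtain ⟨α, hαΓ⟩ := this
      refine ⟨α, ?_, ?_⟩
      · rwa [union_eq_self_of_subset_right (singleton_subset_iff.mpr hαΓ)]
      · rw [union_eq_self_of_subset_right (singleton_subset_iff.mpr hαΓ), ← hΔeq]
        exact hΔunsat
    · refine ⟨φ, hcase, ?_⟩
      intro hsat
      exact hφ (hfin _ hcase hsat {φ} (subset_union_right) (finite_singleton φ))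
end

section
/- Let 𝔐 = (M, ⊨, P(L)) be an abstract model structure with L infinite and let S = (L, ⊢) be the logical structure induced by 𝔐. The following are equivalent: (i) spECQ-sat holds in 𝔐; (ii) there exists φ ∈ L such that {φ} is not satisfiable, and for every satisfiable Γ ⊊ L there exists γ ∈ L such that Γ∪{γ} ⊊ L and Γ∪{γ} is not satisfiable; (iii) there exists φ ∈ L such that {φ} is not satisfiable, pfECQ-sat holds in 𝔐, and for all Γ ⊊ L and all α ∈ L there exists β ∈ L such that Γ∪{β} ⊢ α. -/
open Set

/-- characterization of spECQ-sat. -/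
theorem specqSat_characterization {M L : Type*} [Nonempty M] [Infinite L]
    (sat : M → Set L → Prop) :
    (SPECQsat sat ↔
      ((∃ φ : L, ¬ AmstSatisfiable sat ({φ} : Set L)) ∧
        ∀ Γ : Set L, Γ ≠ univ → AmstSatisfiable sat Γ →
          ∃ γ : L, Γ ∪ {γ} ≠ univ ∧ ¬ AmstSatisfiable sat (Γ ∪ {γ}))) ∧
    (SPECQsat sat ↔
      ((∃ φ : L, ¬ AmstSatisfiable sat ({φ} : Set L)) ∧ PFECQsat sat ∧
        ∀ Γ : Set L, Γ ≠ univ → ∀ α : L, ∃ β : L, Entails sat (Γ ∪ {β}) α)) := by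

  have singphi : ∀ φ : L, ({φ} : Set L) ≠ univ := by
    intro φ h
    obtain ⟨ψ, hψ⟩ := exists_ne φ
    have : ψ ∈ ({φ} : Set L) := h ▸ mem_univ ψ
    exact hψ this
  have hphi : SPECQsat sat → ∃ φ : L, ¬ AmstSatisfiable sat ({φ} : Set L) := by
    intro h
    obtain ⟨α, _, h2⟩ := h ∅ (empty_ne_univ)
    exact ⟨α, by simpa using h2⟩
  constructor
  · constructor
    · intro h
      exact ⟨hphi h, fun Γ hΓ _ => h Γ hΓ⟩
    · rintro ⟨⟨φ, hφ⟩, h2⟩ Γ hΓ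
      by_cases hs : AmstSatisfiable sat Γ
      · exact h2 Γ hΓ hs
      · rcases Set.eq_empty_or_nonempty Γ with he | ⟨γ, hγ⟩
        · subst he
          exact ⟨φ, by simpa using singphi φ, by simpa using hφ⟩
        · have hU : Γ ∪ {γ} = Γ := union_eq_self_of_subset_right (by simpa using hγ)
          exact ⟨γ, by rw [hU]; exact hΓ, by rw [hU]; exact hs⟩
  · constructor
    · intro h
      refine ⟨hphi h, ?_, ?_⟩
      · intro Γ hΓ
        obtain ⟨α, h1, h2⟩ := h Γ hΓ
        exact ⟨Γ ∪ {α}, h1, subset_union_left, h2⟩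
      · intro Γ hΓ α
        obtain ⟨β, _, h2⟩ := h Γ hΓ
        refine ⟨β, fun m hm => absurd ⟨m, hm⟩ h2⟩
    · rintro ⟨⟨φ, hφ⟩, hpf, h3⟩ Γ hΓ
      obtain ⟨β, hβ⟩ := h3 Γ hΓ φ
      have hunsat : ¬ AmstSatisfiable sat (Γ ∪ {β}) := by
        rintro ⟨m, hm⟩
        exact hφ ⟨m, hβ hm⟩
      by_cases hU : Γ ∪ {β} = univ
      · obtain ⟨Δ, hΔne, hsub, hΔuns⟩ := hpf Γ hΓ
        have hβΔ : β ∉ Δ := by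
          intro hb
          apply hΔne
          have : Γ ∪ {β} ⊆ Δ := union_subset hsub (by simpa using hb)
          exact eq_univ_of_univ_subset (hU ▸ this)
        have hΔΓ : Δ = Γ := by
          apply Subset.antisymm _ hsub
          intro x hx
          have : x ∈ Γ ∪ {β} := hU ▸ mem_univ x
          rcases this with h | h
          · exact h
          · exact absurd (h ▸ hx) hβΔ
        obtain ⟨x, hx⟩ := exists_ne β
        have hxΓ : x ∈ Γ := by
          have : x ∈ Γ ∪ {β} := hU ▸ mem_univ x
          rcases this with h | h
          · exact h
          · exact absurd h hx
        have hE : Γ ∪ {x} = Γ := union_eq_self_of_subset_right (by simpa using hxΓ)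
        exact ⟨x, by rw [hE]; exact hΓ, by rw [hE, ← hΔΓ]; exact hΔuns⟩
      · exact ⟨β, hU, hunsat⟩
end

section
/- Let 𝔐 = (M, ⊨, P(L)) be an abstract model structure with L infinite. Then: (i) if spECQ-finsat holds in 𝔐 then gECQ-finsat holds in 𝔐; (ii) if spECQ-finsat holds in 𝔐 then pfECQ-finsat holds in 𝔐; (iii) if gECQ-finsat holds in 𝔐 then sECQ-finsat holds in 𝔐; (iv) if spECQ-finsat holds in 𝔐 then sECQ-finsat holds in 𝔐; (v) if pfECQ-finsat holds in 𝔐 then sECQ-finsat holds in 𝔐. -/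
open Set

/-- implications between the finsat-variants. -/
theorem finsat_variant_implications {M L : Type*} [Nonempty M] [Infinite L]
    (sat : M → Set L → Prop) :
    (SPECQfinsat sat → GECQfinsat sat) ∧
      (SPECQfinsat sat → PFECQfinsat sat) ∧
      (GECQfinsat sat → SECQfinsat sat) ∧
      (SPECQfinsat sat → SECQfinsat sat) ∧
      (PFECQfinsat sat → SECQfinsat sat) := by
  have hfin : ∀ (s : Set L), s.Finite → s ≠ univ := fun s hs h => Set.infinite_univ (h ▸ hs)
  have hg : SPECQfinsat sat → GECQfinsat sat := by
    intro h α
    obtain ⟨β, _, hβ⟩ := h {α} (hfin _ (finite_singleton α))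
    refine ⟨β, ?_⟩
    rw [Set.pair_comm]
    simpa [Set.union_comm, Set.singleton_union] using hβ
  have hpf : SPECQfinsat sat → PFECQfinsat sat := by
    intro h Γ hΓ
    obtain ⟨α, hne, hns⟩ := h Γ hΓ
    exact ⟨Γ ∪ {α}, hne, subset_union_left, hns⟩
  have hs : GECQfinsat sat → SECQfinsat sat := by
    intro h α
    obtain ⟨β, hβ⟩ := h α
    refine ⟨{β}, hfin _ (by simp [Set.Finite.union]), ?_⟩
    have : ({β} : Set L) ∪ {α} = {α, β} := by
      ext x; simp [or_comm]
    rw [this]; exact hβ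
  have hpfs : PFECQfinsat sat → SECQfinsat sat := by
    intro h α
    obtain ⟨Δ, hne, hsub, hns⟩ := h {α} (hfin _ (finite_singleton α))
    refine ⟨Δ, ?_, ?_⟩ <;> rw [Set.union_eq_self_of_subset_right hsub] <;> assumption
  exact ⟨hg, hpf, hs, fun h => hs (hg h), hpfs⟩
end

section
/- Let 𝔐 = (M, ⊨, P(L)) be an abstract model structure with L infinite. The following are equivalent: (i) sECQ-finsat holds in 𝔐; (ii) L is not finitely satisfiable; (iii) for all α ∈ L there exists a finite Γ ⊆ L such that Γ∪{α} ⊊ L and Γ∪{α} is not finitely satisfiable; (iv) for all α ∈ L there exists β ∈ L \ {α} such that L \ {β} is not finitely satisfiable. -/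
open Set

/-- characterization of sECQ-finsat. -/
theorem secqFinsat_characterization {M L : Type*} [Nonempty M] [Infinite L]
    (sat : M → Set L → Prop) :
    (SECQfinsat sat ↔ ¬ AmstFinSatisfiable sat (univ : Set L)) ∧
      (SECQfinsat sat ↔
        ∀ α : L, ∃ Γ : Set L, Γ.Finite ∧ Γ ∪ {α} ≠ univ ∧
          ¬ AmstFinSatisfiable sat (Γ ∪ {α})) ∧
      (SECQfinsat sat ↔
        ∀ α : L, ∃ β : L, β ≠ α ∧
          ¬ AmstFinSatisfiable sat ((univ : Set L) \ {β})) := by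
  -- helper: from a non-finsat set, extract finite unsatisfiable subset
  have key : ∀ X : Set L, ¬ AmstFinSatisfiable sat X →
      ∃ Δ : Set L, Δ ⊆ X ∧ Δ.Finite ∧ ¬ AmstSatisfiable sat Δ := by
    intro X hX
    by_contra h
    push_neg at h
    exact hX (fun Δ hsub hfin => h Δ hsub hfin)
  have h2 : SECQfinsat sat → ¬ AmstFinSatisfiable sat (univ : Set L) := by
    intro h hfin
    obtain ⟨α⟩ := (inferInstance : Nonempty L)
    obtain ⟨Γ, _, hns⟩ := h α
    exact hns (fun Δ hsub hfinΔ => hfin Δ (subset_univ _) hfinΔ)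
  have h3 : ¬ AmstFinSatisfiable sat (univ : Set L) →
      ∀ α : L, ∃ Γ : Set L, Γ.Finite ∧ Γ ∪ {α} ≠ univ ∧
        ¬ AmstFinSatisfiable sat (Γ ∪ {α}) := by
    intro h α
    obtain ⟨Δ, _, hfin, hns⟩ := key _ h
    refine ⟨Δ, hfin, ?_, ?_⟩
    · intro heq
      exact (Set.infinite_univ (α := L)) (heq ▸ (hfin.union (finite_singleton α)))
    · intro hfs
      exact hns (hfs Δ (subset_union_left) hfin)
  have h4 : ¬ AmstFinSatisfiable sat (univ : Set L) →
      ∀ α : L, ∃ β : L, β ≠ α ∧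
        ¬ AmstFinSatisfiable sat ((univ : Set L) \ {β}) := by
    intro h α
    obtain ⟨Δ, _, hfin, hns⟩ := key _ h
    have hinf : ((Δ ∪ {α})ᶜ : Set L).Infinite :=
      Set.Finite.infinite_compl (hfin.union (finite_singleton α))
    obtain ⟨β, hβ⟩ := hinf.nonempty
    simp only [mem_compl_iff, mem_union, mem_singleton_iff, not_or] at hβ
    refine ⟨β, hβ.2, fun hfs => hns (hfs Δ ?_ hfin)⟩
    intro x hx
    exact ⟨trivial, fun hxb => hβ.1 (mem_singleton_iff.mp hxb ▸ hx)⟩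
  have h5 : (∀ α : L, ∃ β : L, β ≠ α ∧
      ¬ AmstFinSatisfiable sat ((univ : Set L) \ {β})) →
      ¬ AmstFinSatisfiable sat (univ : Set L) := by
    intro h hfin
    obtain ⟨α⟩ := (inferInstance : Nonempty L)
    obtain ⟨β, _, hns⟩ := h α
    exact hns (fun Δ hsub hfinΔ => hfin Δ (subset_univ _) hfinΔ)
  have h6 : (∀ α : L, ∃ Γ : Set L, Γ.Finite ∧ Γ ∪ {α} ≠ univ ∧
      ¬ AmstFinSatisfiable sat (Γ ∪ {α})) → SECQfinsat sat := by
    intro h α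
    obtain ⟨Γ, _, hne, hns⟩ := h α
    exact ⟨Γ, hne, hns⟩
  refine ⟨⟨h2, fun h => h6 (h3 h)⟩, ⟨fun h => h3 (h2 h), h6⟩,
    ⟨fun h => h4 (h2 h), fun h => h6 (h3 (h5 h))⟩⟩
end

section
/- Let 𝔐 = (M, ⊨, P(L)) be an abstract model structure with L infinite. Suppose there exist Σ, Δ ⊆ L such that Σ ∪ Δ is finite, Σ ∩ Δ = ∅, and both Σ and Δ are not satisfiable. Then pfECQ-finsat holds in 𝔐. -/
open Set

/-- two disjoint unsatisfiable sets with finite union force pfECQ-finsat. -/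
theorem pfecqFinsat_of_disjoint_unsat {M L : Type*} [Nonempty M] [Infinite L]
    (sat : M → Set L → Prop)
    (h : ∃ S D : Set L, (S ∪ D).Finite ∧ S ∩ D = ∅ ∧
      ¬ AmstSatisfiable sat S ∧ ¬ AmstSatisfiable sat D) :
    PFECQfinsat sat := by
  obtain ⟨S, D, hfin, hdisj, hS, hD⟩ := h
  intro Γ hΓ
  by_cases hcase : Γ ∪ S = univ
  · refine ⟨Γ ∪ D, ?_, subset_union_left, ?_⟩
    · intro hu
      have h1 : Γᶜ ⊆ S := by
        intro x hx
        rcases (eq_univ_iff_forall.mp hcase x) with h | h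
        · exact absurd h hx
        · exact h
      have h2 : Γᶜ ⊆ D := by
        intro x hx
        rcases (eq_univ_iff_forall.mp hu x) with h | h
        · exact absurd h hx
        · exact h
      have : Γᶜ = ∅ := by
        ext x
        simp only [mem_empty_iff_false, iff_false]
        intro hx
        have : x ∈ S ∩ D := ⟨h1 hx, h2 hx⟩
        rw [hdisj] at this
        exact this
      exact hΓ (compl_empty_iff.mp this)
    · intro hfs
      exact hD (hfs D subset_union_right (hfin.subset subset_union_right))
  · refine ⟨Γ ∪ S, hcase, subset_union_left, ?_⟩
    intro hfs
    exact hS (hfs S subset_union_right (hfin.subset subset_union_left))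
end

section
/- Let 𝔐 = (M, ⊨, P(L)) be an abstract model structure with L infinite. Then spECQ-finsat holds in 𝔐 if and only if pfECQ-finsat holds in 𝔐 and there exists φ ∈ L such that {φ} is not finitely satisfiable. -/
open Set

/-- characterization of spECQ-finsat. -/
theorem specqFinsat_iff {M L : Type*} [Nonempty M] [Infinite L]
    (sat : M → Set L → Prop) :
    SPECQfinsat sat ↔
      (PFECQfinsat sat ∧
        ∃ φ : L, ¬ AmstFinSatisfiable sat ({φ} : Set L)) := by
  have mono : ∀ S T : Set L, T ⊆ S → AmstFinSatisfiable sat S →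
      AmstFinSatisfiable sat T := fun S T hTS hS Δ hΔ hfin => hS Δ (hΔ.trans hTS) hfin
  constructor
  · intro h
    refine ⟨fun Γ hΓ => ?_, ?_⟩
    · obtain ⟨α, hne, hns⟩ := h Γ hΓ
      exact ⟨Γ ∪ {α}, hne, subset_union_left, hns⟩
    · obtain ⟨α, _, hns⟩ := h ∅ (by simpa using (Set.empty_ne_univ : (∅ : Set L) ≠ univ))
      exact ⟨α, by simpa using hns⟩
  · rintro ⟨hpf, φ, hφ⟩ Γ hΓ
    by_cases hu : Γ ∪ {φ} = univ
    · obtain ⟨Δ, hΔne, hΓΔ, hΔns⟩ := hpf Γ hΓ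
      have hφΔ : φ ∉ Δ := by
        intro hφΔ
        apply hΔne
        apply Set.eq_univ_of_univ_subset
        rw [← hu]
        exact Set.union_subset hΓΔ (by simpa using hφΔ)
      have hΔΓ : Δ = Γ := by
        apply Set.Subset.antisymm _ hΓΔ
        intro x hx
        have : x ∈ Γ ∪ {φ} := hu ▸ Set.mem_univ x
        rcases this with h | h
        · exact h
        · exact absurd (Set.mem_singleton_iff.mp h ▸ hx) hφΔ
      obtain ⟨x, hxφ⟩ := exists_ne φ
      have hxΓ : x ∈ Γ := by
        have : x ∈ Γ ∪ {φ} := hu ▸ Set.mem_univ x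
        rcases this with h | h
        · exact h
        · exact absurd (Set.mem_singleton_iff.mp h) hxφ
      have hGx : Γ ∪ {x} = Γ := Set.union_eq_self_of_subset_right (by simpa using hxΓ)
      exact ⟨x, by rw [hGx]; exact hΓ, by rw [hGx, ← hΔΓ]; exact hΔns⟩
    · refine ⟨φ, hu, fun hfs => hφ (mono _ _ ?_ hfs)⟩
      exact Set.singleton_subset_iff.mpr (Set.mem_union_right _ rfl)
end
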